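/- arXiv:1111.2409 — 2 statements merged into one kernel-verified Lean document; each statement's English description precedes it below -/
import Mathlib

section
/- If f: ℝⁿ → [0,∞) is log-concave and upper semi-continuous, then f°° = f. -/
/-- The polar of a nonnegative function: `f°(x) = inf_{y : f(y)>0} e^{−⟨x,y⟩}/f(y)`. -/
noncomputable def funPolar {n : ℕ} (f : EuclideanSpace ℝ (Fin n) → ℝ)
    (x : EuclideanSpace ℝ (Fin n)) : ℝ :=
  ⨅ y : {y : EuclideanSpace ℝ (Fin n) // 0 < f y}, Real.exp (-(inner ℝ x y.1 : ℝ)) / f y.1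

section Aux

variable {n : ℕ} {f : EuclideanSpace ℝ (Fin n) → ℝ}

lemma funPolar_nonneg (f : EuclideanSpace ℝ (Fin n) → ℝ) (x : EuclideanSpace ℝ (Fin n)) :
    0 ≤ funPolar f x := by
  unfold funPolar
  exact Real.iInf_nonneg fun y => div_nonneg (Real.exp_pos _).le y.2.le

lemma funPolar_le {x y : EuclideanSpace ℝ (Fin n)} (hy : 0 < f y) :
    funPolar f x ≤ Real.exp (-(inner ℝ x y : ℝ)) / f y := by
  unfold funPolar
  have hbdd : BddBelow (Set.range fun z : {z : EuclideanSpace ℝ (Fin n) // 0 < f z} =>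
      Real.exp (-(inner ℝ x z.1 : ℝ)) / f z.1) := by
    refine ⟨0, ?_⟩
    rintro _ ⟨z, rfl⟩
    exact div_nonneg (Real.exp_pos _).le z.2.le
  exact ciInf_le hbdd ⟨y, hy⟩

lemma le_funPolar {x : EuclideanSpace ℝ (Fin n)} {c : ℝ} (hne : ∃ y, 0 < f y)
    (h : ∀ y, 0 < f y → c ≤ Real.exp (-(inner ℝ x y : ℝ)) / f y) :
    c ≤ funPolar f x := by
  have : Nonempty {y : EuclideanSpace ℝ (Fin n) // 0 < f y} :=
    ⟨⟨hne.choose, hne.choose_spec⟩⟩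
  exact le_ciInf fun y => h y.1 y.2

/-- Separation of a point below the "epigraph of `-log f`" from that epigraph. -/
lemma sep_aux (hlc : ConcaveOn ℝ {x | 0 < f x} (fun x => Real.log (f x)))
    (husc : UpperSemicontinuous f) (hne : ∃ x₀, 0 < f x₀)
    {x : EuclideanSpace ℝ (Fin n)} {s : ℝ} (hx : f x < Real.exp (-s)) :
    ∃ (w : EuclideanSpace ℝ (Fin n)) (β u : ℝ), β ≤ 0 ∧
      (∀ z t, Real.exp (-t) ≤ f z → (inner ℝ w z : ℝ) + β * t < u) ∧
      u < (inner ℝ w x : ℝ) + β * s := by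
  classical
  set K : Set (EuclideanSpace ℝ (Fin n) × ℝ) := {p | Real.exp (-p.2) ≤ f p.1} with hKdef
  have hKconv : Convex ℝ K := by
    rintro ⟨z₁, t₁⟩ h₁ ⟨z₂, t₂⟩ h₂ a b ha hb hab
    simp only [hKdef, Set.mem_setOf_eq] at h₁ h₂
    have hz₁ : 0 < f z₁ := lt_of_lt_of_le (Real.exp_pos _) h₁
    have hz₂ : 0 < f z₂ := lt_of_lt_of_le (Real.exp_pos _) h₂
    have hmid : a • z₁ + b • z₂ ∈ {x | 0 < f x} := hlc.1 hz₁ hz₂ ha hb hab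
    have hlog := hlc.2 hz₁ hz₂ ha hb hab
    simp only [smul_eq_mul] at hlog
    have h₁' : -t₁ ≤ Real.log (f z₁) := (Real.le_log_iff_exp_le hz₁).2 h₁
    have h₂' : -t₂ ≤ Real.log (f z₂) := (Real.le_log_iff_exp_le hz₂).2 h₂
    show Real.exp (-(a • (z₁, t₁) + b • (z₂, t₂)).2) ≤ f (a • (z₁, t₁) + b • (z₂, t₂)).1
    have hfst : (a • (z₁, t₁) + b • (z₂, t₂)).1 = a • z₁ + b • z₂ := rfl
    have hsnd : (a • (z₁, t₁) + b • (z₂, t₂)).2 = a * t₁ + b * t₂ := rfl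
    rw [hfst, hsnd]
    have hmidpos : 0 < f (a • z₁ + b • z₂) := hmid
    rw [← Real.le_log_iff_exp_le hmidpos]
    have hA : a * (-t₁) ≤ a * Real.log (f z₁) := mul_le_mul_of_nonneg_left h₁' ha
    have hB : b * (-t₂) ≤ b * Real.log (f z₂) := mul_le_mul_of_nonneg_left h₂' hb
    have : -(a * t₁ + b * t₂) = a * (-t₁) + b * (-t₂) := by ring
    rw [this]
    linarith
  have hKclosed : IsClosed K := by
    rw [← isOpen_compl_iff, isOpen_iff_mem_nhds]
    rintro ⟨z, t⟩ hp
    simp only [hKdef, Set.mem_compl_iff, Set.mem_setOf_eq, not_le] at hp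
    obtain ⟨c, hc1, hc2⟩ := exists_between hp
    have h1 : ∀ᶠ z' in nhds z, f z' < c := husc z c hc1
    have h2 : ∀ᶠ t' in nhds t, c < Real.exp (-t') := by
      have hcont : ContinuousAt (fun t' : ℝ => Real.exp (-t')) t :=
        (Real.continuous_exp.comp continuous_neg).continuousAt
      exact hcont.eventually_const_lt hc2
    rw [nhds_prod_eq]
    filter_upwards [h1.prod_inl (nhds t), h2.prod_inr (nhds z)] with p hp1 hp2
    simp only [hKdef, Set.mem_compl_iff, Set.mem_setOf_eq, not_le]
    exact lt_trans hp1 hp2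
  have hnotmem : ((x, s) : EuclideanSpace ℝ (Fin n) × ℝ) ∉ K := by
    simp only [hKdef, Set.mem_setOf_eq, not_le]
    exact hx
  obtain ⟨φ, u, hφK, hφx⟩ := geometric_hahn_banach_closed_point hKconv hKclosed hnotmem
  set ψ : EuclideanSpace ℝ (Fin n) →L[ℝ] ℝ := φ.comp (ContinuousLinearMap.inl ℝ (EuclideanSpace ℝ (Fin n)) ℝ) with hψdef
  set β : ℝ := φ (0, 1) with hβdef
  have hdecomp : ∀ (z : EuclideanSpace ℝ (Fin n)) (t : ℝ), φ (z, t) = ψ z + β * t := by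
    intro z t
    have hsplit : ((z, t) : EuclideanSpace ℝ (Fin n) × ℝ) = ((z, (0 : ℝ)) : EuclideanSpace ℝ (Fin n) × ℝ) + t • (((0 : EuclideanSpace ℝ (Fin n)), (1 : ℝ)) : EuclideanSpace ℝ (Fin n) × ℝ) := by
      simp [Prod.ext_iff]
    rw [hsplit, map_add, map_smul]
    simp [hψdef, hβdef, smul_eq_mul, ContinuousLinearMap.comp_apply, mul_comm]
  set w : EuclideanSpace ℝ (Fin n) := (InnerProductSpace.toDual ℝ (EuclideanSpace ℝ (Fin n))).symm ψ with hwdef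
  have hw : ∀ z : EuclideanSpace ℝ (Fin n), (inner ℝ w z : ℝ) = ψ z := fun z => InnerProductSpace.toDual_symm_apply
  have hK' : ∀ z t, Real.exp (-t) ≤ f z → (inner ℝ w z : ℝ) + β * t < u := by
    intro z t hzt
    have := hφK (z, t) hzt
    rw [hdecomp] at this
    rwa [hw]
  have hx' : u < (inner ℝ w x : ℝ) + β * s := by
    have := hφx
    rw [hdecomp] at this
    rwa [hw]
  refine ⟨w, β, u, ?_, hK', hx'⟩
  by_contra hβpos
  push_neg at hβpos
  obtain ⟨x₀, hx₀⟩ := hne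
  set t₀ : ℝ := max (-Real.log (f x₀)) ((u - (inner ℝ w x₀ : ℝ)) / β) with ht₀def
  have hmem : Real.exp (-t₀) ≤ f x₀ := by
    have h1 : -Real.log (f x₀) ≤ t₀ := le_max_left _ _
    calc Real.exp (-t₀) ≤ Real.exp (Real.log (f x₀)) := Real.exp_le_exp.2 (by linarith)
      _ = f x₀ := Real.exp_log hx₀
  have h2 := hK' x₀ t₀ hmem
  have h3 : (u - (inner ℝ w x₀ : ℝ)) / β ≤ t₀ := le_max_right _ _
  have h4 : u - (inner ℝ w x₀ : ℝ) ≤ β * t₀ := by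
    rw [div_le_iff₀ hβpos] at h3
    linarith
  linarith

/-- Existence of an exponential-affine majorant. -/
lemma affine_bound (hlc : ConcaveOn ℝ {x | 0 < f x} (fun x => Real.log (f x)))
    (husc : UpperSemicontinuous f) (hne : ∃ x₀, 0 < f x₀) :
    ∃ (w : EuclideanSpace ℝ (Fin n)) (c : ℝ),
      ∀ z, 0 < f z → f z ≤ Real.exp (c - (inner ℝ w z : ℝ)) := by
  obtain ⟨x₀, hx₀⟩ := hne
  have hexp1 : (1 : ℝ) < Real.exp 1 := by
    have := Real.add_one_le_exp (1 : ℝ)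
    linarith
  have hx : f x₀ < Real.exp (-(-Real.log (f x₀) - 1)) := by
    have : -(-Real.log (f x₀) - 1) = Real.log (f x₀) + 1 := by ring
    rw [this, Real.exp_add, Real.exp_log hx₀]
    nlinarith
  obtain ⟨w, β, u, hβ, hK, hxs⟩ := sep_aux hlc husc ⟨x₀, hx₀⟩ hx
  have h₀ : (inner ℝ w x₀ : ℝ) + β * (-Real.log (f x₀)) < u :=
    hK x₀ (-Real.log (f x₀)) (by rw [neg_neg, Real.exp_log hx₀])
  have hβneg : β < 0 := by
    have hexpand : β * (-Real.log (f x₀) - 1) = β * (-Real.log (f x₀)) - β := by ring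
    rw [hexpand] at hxs
    linarith
  have hb : 0 < -β := neg_pos.2 hβneg
  refine ⟨(-β)⁻¹ • w, u / (-β), ?_⟩
  intro z hz
  have h := hK z (-Real.log (f z)) (by rw [neg_neg, Real.exp_log hz])
  have hinner : (inner ℝ ((-β)⁻¹ • w) z : ℝ) = (-β)⁻¹ * (inner ℝ w z : ℝ) :=
    real_inner_smul_left _ _ _
  have h2 : Real.log (f z) * (-β) < u - (inner ℝ w z : ℝ) := by
    have he : β * (-Real.log (f z)) = Real.log (f z) * (-β) := by ring
    rw [he] at h
    linarith
  have h3 : Real.log (f z) < (u - (inner ℝ w z : ℝ)) / (-β) := (lt_div_iff₀ hb).2 h2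
  have h4 : (u - (inner ℝ w z : ℝ)) / (-β) = u / (-β) - (inner ℝ ((-β)⁻¹ • w) z : ℝ) := by
    rw [hinner]
    ring
  calc f z = Real.exp (Real.log (f z)) := (Real.exp_log hz).symm
    _ ≤ Real.exp (u / (-β) - (inner ℝ ((-β)⁻¹ • w) z : ℝ)) :=
        Real.exp_le_exp.2 (by rw [← h4]; exact h3.le)

lemma exists_funPolar_pos (hlc : ConcaveOn ℝ {x | 0 < f x} (fun x => Real.log (f x)))
    (husc : UpperSemicontinuous f) (hne : ∃ x₀, 0 < f x₀) :
    ∃ w, 0 < funPolar f w := by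
  obtain ⟨w, c, hwc⟩ := affine_bound hlc husc hne
  refine ⟨w, lt_of_lt_of_le (Real.exp_pos (-c)) (le_funPolar hne ?_)⟩
  intro z hz
  rw [le_div_iff₀ hz]
  calc Real.exp (-c) * f z ≤ Real.exp (-c) * Real.exp (c - (inner ℝ w z : ℝ)) :=
        mul_le_mul_of_nonneg_left (hwc z hz) (Real.exp_pos _).le
    _ = Real.exp (-(inner ℝ w z : ℝ)) := by rw [← Real.exp_add]; ring_nf

end Aux

/-- If `f : ℝⁿ → [0,∞)` is log-concave and upper semi-continuous, then `f°° = f`. -/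
theorem stmt6 {n : ℕ} (f : EuclideanSpace ℝ (Fin n) → ℝ)
    (hf0 : ∀ x, 0 ≤ f x)
    (hlc : ConcaveOn ℝ {x | 0 < f x} (fun x => Real.log (f x)))
    (husc : UpperSemicontinuous f) :
    ∀ x, funPolar (funPolar f) x = f x := by
  by_cases hne : ∃ y, 0 < f y
  · -- main case
    -- easy direction: f x ≤ f°° x
    have easy : ∀ x, f x ≤ funPolar (funPolar f) x := by
      intro x
      rcases eq_or_lt_of_le (hf0 x) with h | hx
      · rw [← h]; exact funPolar_nonneg _ _
      · obtain ⟨w₁, hw₁⟩ := exists_funPolar_pos hlc husc hne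
        apply le_funPolar ⟨w₁, hw₁⟩
        intro y hy
        have h1 : funPolar f y ≤ Real.exp (-(inner ℝ y x : ℝ)) / f x := funPolar_le hx
        rw [le_div_iff₀ hy]
        calc f x * funPolar f y ≤ f x * (Real.exp (-(inner ℝ y x : ℝ)) / f x) :=
              mul_le_mul_of_nonneg_left h1 hx.le
          _ = Real.exp (-(inner ℝ y x : ℝ)) := mul_div_cancel₀ _ hx.ne'
          _ = Real.exp (-(inner ℝ x y : ℝ)) := by rw [real_inner_comm]
    -- hard direction: f°° x ≤ r for any r > f x
    have hard : ∀ x r, f x < r → funPolar (funPolar f) x ≤ r := by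
      intro x r hr
      have hr0 : 0 < r := lt_of_le_of_lt (hf0 x) hr
      have hx : f x < Real.exp (-(-Real.log r)) := by rwa [neg_neg, Real.exp_log hr0]
      obtain ⟨w, β, u, hβ, hK, hxs⟩ := sep_aux hlc husc hne hx
      rcases hβ.lt_or_eq with hβneg | hβ0
      · -- β < 0
        have hb : 0 < -β := neg_pos.2 hβneg
        set w' := (-β)⁻¹ • w with hw'def
        have hinner : ∀ z : EuclideanSpace ℝ (Fin n),
            (inner ℝ w' z : ℝ) = (-β)⁻¹ * (inner ℝ w z : ℝ) := fun z => real_inner_smul_left _ _ _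
        have hpos : Real.exp (-(u / (-β))) ≤ funPolar f w' := by
          apply le_funPolar hne
          intro z hz
          have h := hK z (-Real.log (f z)) (by rw [neg_neg, Real.exp_log hz])
          have h2 : Real.log (f z) * (-β) < u - (inner ℝ w z : ℝ) := by nlinarith [h]
          have h3 : Real.log (f z) < u / (-β) - (inner ℝ w' z : ℝ) := by
            have h2' := (lt_div_iff₀ hb).2 h2
            have heq : (u - (inner ℝ w z : ℝ)) / (-β) = u / (-β) - (-β)⁻¹ * (inner ℝ w z : ℝ) := by
              ring
            rw [heq] at h2'
            rw [hinner z]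
            linarith
          rw [le_div_iff₀ hz]
          calc Real.exp (-(u / (-β))) * f z
              ≤ Real.exp (-(u / (-β))) * Real.exp (u / (-β) - (inner ℝ w' z : ℝ)) := by
                apply mul_le_mul_of_nonneg_left _ (Real.exp_pos _).le
                calc f z = Real.exp (Real.log (f z)) := (Real.exp_log hz).symm
                  _ ≤ _ := Real.exp_le_exp.2 h3.le
            _ = Real.exp (-(inner ℝ w' z : ℝ)) := by rw [← Real.exp_add]; ring_nf
        have hppos : 0 < funPolar f w' := lt_of_lt_of_le (Real.exp_pos _) hpos
        have hlast : u / (-β) - (inner ℝ w' x : ℝ) < Real.log r := by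
          have h5 : u < (inner ℝ w x : ℝ) + (-β) * Real.log r := by nlinarith [hxs]
          have heq : u / (-β) - (-β)⁻¹ * (inner ℝ w x : ℝ) = (u - (inner ℝ w x : ℝ)) / (-β) := by
            ring
          rw [hinner, heq, div_lt_iff₀ hb]
          nlinarith [h5]
        calc funPolar (funPolar f) x ≤ Real.exp (-(inner ℝ x w' : ℝ)) / funPolar f w' :=
              funPolar_le hppos
          _ ≤ Real.exp (-(inner ℝ x w' : ℝ)) / Real.exp (-(u / (-β))) := by gcongr
          _ = Real.exp (u / (-β) - (inner ℝ w' x : ℝ)) := by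
              rw [← Real.exp_sub]
              congr 1
              rw [real_inner_comm x w']
              ring
          _ ≤ r := by
              rw [← Real.exp_log hr0]
              exact Real.exp_le_exp.2 hlast.le
      · -- β = 0
        rw [hβ0] at hK hxs
        simp only [zero_mul, add_zero] at hK hxs
        obtain ⟨w₀, c₀, hw₀⟩ := affine_bound hlc husc hne
        have hd : 0 < (inner ℝ w x : ℝ) - u := by linarith
        set T : ℝ := max 0 ((c₀ - (inner ℝ w₀ x : ℝ) - Real.log r) / ((inner ℝ w x : ℝ) - u))
          with hTdef
        have hTnn : 0 ≤ T := le_max_left _ _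
        set y := w₀ + T • w with hydef
        have hyz : ∀ z : EuclideanSpace ℝ (Fin n),
            (inner ℝ y z : ℝ) = (inner ℝ w₀ z : ℝ) + T * (inner ℝ w z : ℝ) := by
          intro z
          rw [hydef, inner_add_left, real_inner_smul_left]
        have hpos : Real.exp (-(T * u + c₀)) ≤ funPolar f y := by
          apply le_funPolar hne
          intro z hz
          have h1 : f z ≤ Real.exp (c₀ - (inner ℝ w₀ z : ℝ)) := hw₀ z hz
          have h2 : (inner ℝ w z : ℝ) < u := hK z (-Real.log (f z))
            (by rw [neg_neg, Real.exp_log hz])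
          rw [le_div_iff₀ hz]
          calc Real.exp (-(T * u + c₀)) * f z
              ≤ Real.exp (-(T * u + c₀)) * Real.exp (c₀ - (inner ℝ w₀ z : ℝ)) :=
                mul_le_mul_of_nonneg_left h1 (Real.exp_pos _).le
            _ = Real.exp (-(T * u) - (inner ℝ w₀ z : ℝ)) := by rw [← Real.exp_add]; ring_nf
            _ ≤ Real.exp (-(T * (inner ℝ w z : ℝ)) - (inner ℝ w₀ z : ℝ)) :=
                Real.exp_le_exp.2 (by nlinarith [hTnn, h2])
            _ = Real.exp (-(inner ℝ y z : ℝ)) := by rw [hyz]; ring_nf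
        have hppos : 0 < funPolar f y := lt_of_lt_of_le (Real.exp_pos _) hpos
        have hT2 : c₀ - (inner ℝ w₀ x : ℝ) - Real.log r ≤ T * ((inner ℝ w x : ℝ) - u) := by
          have := le_max_right 0 ((c₀ - (inner ℝ w₀ x : ℝ) - Real.log r) / ((inner ℝ w x : ℝ) - u))
          rw [← hTdef] at this
          rw [div_le_iff₀ hd] at this
          exact this
        calc funPolar (funPolar f) x ≤ Real.exp (-(inner ℝ x y : ℝ)) / funPolar f y :=
              funPolar_le hppos
          _ ≤ Real.exp (-(inner ℝ x y : ℝ)) / Real.exp (-(T * u + c₀)) := by gcongr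
          _ = Real.exp (T * u + c₀ - (inner ℝ y x : ℝ)) := by
              rw [← Real.exp_sub]
              congr 1
              rw [real_inner_comm x y]
              ring
          _ ≤ r := by
              rw [← Real.exp_log hr0]
              apply Real.exp_le_exp.2
              rw [hyz]
              nlinarith [hT2]
    intro x
    refine le_antisymm ?_ (easy x)
    by_contra h
    push_neg at h
    have := hard x ((f x + funPolar (funPolar f) x) / 2) (by linarith)
    linarith
  · -- f ≡ 0
    push_neg at hne
    have hf : ∀ y, f y = 0 := fun y => le_antisymm (hne y) (hf0 y)
    have key : ∀ g : EuclideanSpace ℝ (Fin n) → ℝ, (∀ y, g y = 0) →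
        ∀ x, funPolar g x = 0 := by
      intro g hg x
      have : IsEmpty {y : EuclideanSpace ℝ (Fin n) // 0 < g y} :=
        ⟨fun y => absurd y.2 (by rw [hg y.1]; exact lt_irrefl 0)⟩
      unfold funPolar
      rw [iInf_of_isEmpty, Real.sInf_empty]
    intro x
    rw [hf x]
    exact key _ (key f hf) x
end

section
/- Let g: ℝⁿ → [0,∞) be an s-concave function (s a positive integer) with bounded support. Define K_s(g) = {(x,y) ∈ ℝⁿ × ℝˢ : √s · x ∈ closure(supp g), |y| ≤ g^{1/s}(√s · x)}. Then Vol_{n+s}(K_s(g)) = (Vol(B₂ˢ) / s^{n/2}) · ∫_{ℝⁿ} g(x) dx. -/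
open MeasureTheory

/-- The body `K_s(g) = {(x,y) ∈ ℝⁿ×ℝˢ : √s·x ∈ closure(supp g), |y| ≤ g(√s·x)^{1/s}}`. -/
noncomputable def Ksbody {n s : ℕ} (g : EuclideanSpace ℝ (Fin n) → ℝ) :
    Set (EuclideanSpace ℝ (Fin n) × EuclideanSpace ℝ (Fin s)) :=
  {p | Real.sqrt s • p.1 ∈ closure (Function.support g) ∧
      ‖p.2‖ ≤ g (Real.sqrt s • p.1) ^ ((1 : ℝ) / s)}

/-- For an `s`-concave `g : ℝⁿ → [0,∞)` with bounded support,
`Vol_{n+s}(K_s(g)) = (Vol(B₂ˢ)/s^{n/2}) ∫ g`. -/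
theorem stmt15 {n s : ℕ} (hs : 0 < s) (g : EuclideanSpace ℝ (Fin n) → ℝ)
    (hg0 : ∀ x, 0 ≤ g x)
    (hsconc : ConcaveOn ℝ {x | 0 < g x} (fun x => g x ^ ((1 : ℝ) / s)))
    (hbd : Bornology.IsBounded (Function.support g))
    (hmeas : Measurable g) :
    volume (Ksbody (s := s) g)
      = volume (Metric.ball (0 : EuclideanSpace ℝ (Fin s)) 1)
        * ENNReal.ofReal ((Real.sqrt s ^ n)⁻¹ * ∫ x, g x) := by
  classical
  set c : ℝ := Real.sqrt s with hc_def
  have hc : 0 < c := Real.sqrt_pos.2 (by exact_mod_cast hs)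
  have hs' : (s : ℝ) ≠ 0 := Nat.cast_ne_zero.2 hs.ne'
  set C : Set (EuclideanSpace ℝ (Fin n)) := {x | 0 < g x} with hC_def
  have hsupp : Function.support g = C := by
    ext x
    simp only [Function.mem_support, hC_def, Set.mem_setOf_eq]
    exact ⟨fun h => (hg0 x).lt_of_ne (Ne.symm h), fun h => h.ne'⟩
  have hCbd : Bornology.IsBounded C := hsupp ▸ hbd
  have hzero : ∀ x, x ∉ closure C → g x = 0 := by
    intro x hx
    by_contra h
    exact hx (subset_closure (hsupp ▸ Function.mem_support.2 h))
  have hinv : ∀ x, (g x ^ ((1 : ℝ) / s)) ^ (s : ℕ) = g x := by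
    intro x
    rw [← Real.rpow_natCast (g x ^ ((1 : ℝ) / s)) s, ← Real.rpow_mul (hg0 x),
      one_div, inv_mul_cancel₀ hs', Real.rpow_one]
  -- finiteness of the lintegral of g
  have hclosure_fin : volume (closure C) < ⊤ :=
    (Metric.isCompact_of_isClosed_isBounded isClosed_closure hCbd.closure).measure_lt_top
  have hfin : ∫⁻ x, ENNReal.ofReal (g x) < ⊤ := by
    rcases eq_or_ne (volume (closure C)) 0 with hnull | hpos
    · have hae : (fun x => ENNReal.ofReal (g x)) =ᵐ[volume] 0 := by
        refine measure_mono_null (fun x hx => ?_) hnull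
        simp only [Set.mem_setOf_eq, Pi.zero_apply] at hx
        by_contra hxc
        simp [hzero x hxc] at hx
      rw [lintegral_congr_ae hae]
      simp
    · have hCconv : Convex ℝ C := hsconc.1
      have hint_ne : (interior C).Nonempty := by
        by_contra h
        rw [Set.not_nonempty_iff_eq_empty] at h
        have hfr : closure C = frontier C := by rw [frontier, h, Set.diff_empty]
        exact hpos (hfr ▸ hCconv.addHaar_frontier volume)
      obtain ⟨z, hz⟩ := hint_ne
      obtain ⟨r, hr, hball⟩ := Metric.isOpen_iff.1 isOpen_interior z hz
      obtain ⟨R, hR⟩ := hCbd.subset_closedBall z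
      have hzC : z ∈ C := interior_subset hz
      have hR0 : 0 ≤ R := by
        have := hR hzC
        simpa using this
      set M : ℝ := g z ^ ((1 : ℝ) / s) * (1 + 2 * R / r) with hM_def
      have hfz0 : 0 ≤ g z ^ ((1 : ℝ) / s) := Real.rpow_nonneg (hg0 z) _
      have hfac1 : (1 : ℝ) ≤ 1 + 2 * R / r := by
        have : 0 ≤ 2 * R / r := by positivity
        linarith
      have hM0 : 0 ≤ M := by positivity
      have hbound : ∀ x, g x ≤ M ^ s := by
        intro x
        by_cases hx : x ∈ C
        · have hfx0 : 0 ≤ g x ^ ((1 : ℝ) / s) := Real.rpow_nonneg (hg0 x) _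
          have key : g x ^ ((1 : ℝ) / s) ≤ M := by
            by_cases hxz : x = z
            · subst hxz
              calc g x ^ ((1 : ℝ) / s) = g x ^ ((1 : ℝ) / s) * 1 := by ring
                _ ≤ M := by
                    rw [hM_def]
                    exact mul_le_mul_of_nonneg_left hfac1 hfx0
            · set t : ℝ := ‖x - z‖ with ht_def
              have ht : 0 < t := by
                rw [ht_def, norm_pos_iff]
                exact sub_ne_zero.2 hxz
              have htR : t ≤ R := by
                have := hR hx
                rw [Metric.mem_closedBall, dist_eq_norm] at this
                exact this
              set a : ℝ := r / (2 * t) with ha_def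
              have ha : 0 < a := by positivity
              have h1a : (0 : ℝ) < 1 + a := by linarith
              set w : EuclideanSpace ℝ (Fin n) := z + a • (z - x) with hw_def
              have hw : w ∈ C := by
                apply interior_subset
                apply hball
                rw [Metric.mem_ball, dist_eq_norm]
                have : w - z = a • (z - x) := by rw [hw_def]; abel
                rw [this, norm_smul, Real.norm_eq_abs, abs_of_pos ha]
                have hnz : ‖z - x‖ = t := by rw [ht_def, norm_sub_rev]
                rw [hnz, ha_def]
                have heq : r / (2 * t) * t = r / 2 := by field_simp
                rw [heq]
                linarith
              have hcomb : (a / (1 + a)) • x + (1 / (1 + a)) • w = z := by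
                rw [hw_def]
                match_scalars <;> (field_simp; try ring)
              have hsum : a / (1 + a) + 1 / (1 + a) = 1 := by field_simp; ring
              have hconc := hsconc.2 hx hw (by positivity) (by positivity) hsum
              rw [hcomb] at hconc
              simp only [smul_eq_mul] at hconc
              have hfw0 : 0 ≤ g w ^ ((1 : ℝ) / s) := Real.rpow_nonneg (hg0 w) _
              have h2 : a / (1 + a) * (g x ^ ((1 : ℝ) / s)) ≤ g z ^ ((1 : ℝ) / s) := by
                have hterm : 0 ≤ 1 / (1 + a) * (g w ^ ((1 : ℝ) / s)) := by positivity
                linarith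
              have h3 : g x ^ ((1 : ℝ) / s) ≤ g z ^ ((1 : ℝ) / s) * ((1 + a) / a) := by
                have hkey : a / (1 + a) * ((1 + a) / a) = 1 := by field_simp
                calc g x ^ ((1 : ℝ) / s)
                    = a / (1 + a) * (g x ^ ((1 : ℝ) / s)) * ((1 + a) / a) := by
                      rw [mul_comm (a / (1 + a)) _, mul_assoc, hkey, mul_one]
                  _ ≤ g z ^ ((1 : ℝ) / s) * ((1 + a) / a) :=
                      mul_le_mul_of_nonneg_right h2 (by positivity)
              have h4 : (1 + a) / a = 1 + 2 * t / r := by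
                rw [ha_def]; field_simp; ring
              have h5 : 1 + 2 * t / r ≤ 1 + 2 * R / r := by gcongr
              calc g x ^ ((1 : ℝ) / s) ≤ g z ^ ((1 : ℝ) / s) * ((1 + a) / a) := h3
                _ = g z ^ ((1 : ℝ) / s) * (1 + 2 * t / r) := by rw [h4]
                _ ≤ M := by rw [hM_def]; exact mul_le_mul_of_nonneg_left h5 hfz0
          calc g x = (g x ^ ((1 : ℝ) / s)) ^ (s : ℕ) := (hinv x).symm
            _ ≤ M ^ s := pow_le_pow_left₀ hfx0 key s
        · have : g x = 0 := by
            by_contra h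
            exact hx (hsupp ▸ Function.mem_support.2 h)
          rw [this]
          positivity
      calc ∫⁻ x, ENNReal.ofReal (g x)
          ≤ ∫⁻ x, (closure C).indicator (fun _ => ENNReal.ofReal (M ^ s)) x := by
            apply lintegral_mono
            intro x
            by_cases hx : x ∈ closure C
            · rw [Set.indicator_of_mem hx]
              exact ENNReal.ofReal_le_ofReal (hbound x)
            · simp [Set.indicator_of_notMem hx, hzero x hx]
        _ = ENNReal.ofReal (M ^ s) * volume (closure C) := by
            rw [lintegral_indicator isClosed_closure.measurableSet, setLIntegral_const]
        _ < ⊤ := ENNReal.mul_lt_top ENNReal.ofReal_lt_top hclosure_fin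
  have hint : Integrable g := by
    refine ⟨hmeas.aestronglyMeasurable, ?_⟩
    rw [hasFiniteIntegral_iff_ofReal (ae_of_all _ hg0)]
    exact hfin
  -- measurability of the body
  have hsm : Measurable fun x : EuclideanSpace ℝ (Fin n) => c • x :=
    (continuous_const_smul c).measurable
  have hrpow : Measurable fun x => g x ^ ((1 : ℝ) / s) :=
    (Real.continuous_rpow_const (by positivity)).measurable.comp hmeas
  have hKmeas : MeasurableSet (Ksbody (s := s) g) := by
    have hEq : Ksbody (s := s) g =
        ((fun p : EuclideanSpace ℝ (Fin n) × EuclideanSpace ℝ (Fin s) => c • p.1) ⁻¹'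
          closure (Function.support g)) ∩
        {p : EuclideanSpace ℝ (Fin n) × EuclideanSpace ℝ (Fin s) |
          ‖p.2‖ ≤ g (c • p.1) ^ ((1 : ℝ) / s)} := rfl
    rw [hEq]
    exact ((hsm.comp measurable_fst) isClosed_closure.measurableSet).inter
      (measurableSet_le (measurable_norm.comp measurable_snd)
        (hrpow.comp (hsm.comp measurable_fst)))
  -- slice computation
  have hslice : ∀ x : EuclideanSpace ℝ (Fin n),
      volume (Prod.mk x ⁻¹' Ksbody (s := s) g)
        = ENNReal.ofReal (g (c • x)) *
            volume (Metric.ball (0 : EuclideanSpace ℝ (Fin s)) 1) := by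
    intro x
    by_cases hx : c • x ∈ closure (Function.support g)
    · have hset : Prod.mk x ⁻¹' Ksbody (s := s) g
          = Metric.closedBall (0 : EuclideanSpace ℝ (Fin s)) (g (c • x) ^ ((1 : ℝ) / s)) := by
        ext y
        simp [Ksbody, hx, Metric.mem_closedBall, dist_zero_right, hc_def, (show Real.sqrt s • x ∈ closure (Function.support g) from hx)]
      rw [hset, Measure.addHaar_closedBall _ _ (Real.rpow_nonneg (hg0 _) _),
        finrank_euclideanSpace, Fintype.card_fin, hinv]
    · have h0 : g (c • x) = 0 := hzero _ (by rwa [hsupp] at hx)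
      have hset : Prod.mk x ⁻¹' Ksbody (s := s) g = (∅ : Set (EuclideanSpace ℝ (Fin s))) := by
        ext y
        simp [Ksbody, hx, hc_def, (show Real.sqrt s • x ∉ closure (Function.support g) from hx)]
      rw [hset, measure_empty, h0, ENNReal.ofReal_zero, zero_mul]
  -- Fubini
  have hprod : volume (Ksbody (s := s) g)
      = ∫⁻ x, volume (Prod.mk x ⁻¹' Ksbody (s := s) g) := by
    rw [Measure.volume_eq_prod, Measure.prod_apply hKmeas]
  -- scaling
  have hscale : ∫⁻ x, ENNReal.ofReal (g (c • x))
      = ENNReal.ofReal ((c ^ n)⁻¹) * ∫⁻ x, ENNReal.ofReal (g x) := by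
    have hmap := Measure.map_addHaar_smul (volume : Measure (EuclideanSpace ℝ (Fin n)))
      (r := c) hc.ne'
    rw [← lintegral_map hmeas.ennreal_ofReal hsm, hmap, lintegral_smul_measure,
      finrank_euclideanSpace, Fintype.card_fin, abs_of_nonneg (by positivity), smul_eq_mul]
  have hofReal : ∫⁻ x, ENNReal.ofReal (g x) = ENNReal.ofReal (∫ x, g x) :=
    (ofReal_integral_eq_lintegral_ofReal hint (ae_of_all _ hg0)).symm
  rw [hprod, lintegral_congr hslice,
    lintegral_mul_const _ (Measurable.ennreal_ofReal (show Measurable fun x => g (c • x) from hmeas.comp hsm)), hscale, hofReal,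
    ENNReal.ofReal_mul (by positivity)]
  ring
end
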